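/- In the proof setting of the single-dipped lemma: if (v_0, ..., v_n) is a simple path in a rooted cactus digraph and v_k ∈ C(v_0) but v_{k+1} ∉ C(v_0), then v_k ≺ v_{k+1} and v_{k+1} ≼ v_{k+2} ≼ ... ≼ v_n. -/

import Mathlib

structure DirGraph (V : Type) where
  Adj : V → V → Prop
  loopless : ∀ v, ¬ Adj v v

namespace DirGraph

variable {V V' : Type}

/-- A walk is a nonempty list of vertices with consecutive arcs. -/
def IsWalk (G : DirGraph V) : List V → Prop
  | [] => False
  | [_] => True
  | a :: b :: l => G.Adj a b ∧ G.IsWalk (b :: l)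

def IsWalkFromTo (G : DirGraph V) (p : List V) (x y : V) : Prop :=
  G.IsWalk p ∧ p.head? = some x ∧ p.getLast? = some y

def StronglyConnected (G : DirGraph V) : Prop :=
  ∀ x y : V, ∃ p, G.IsWalkFromTo p x y

def IsSimplePath (G : DirGraph V) (p : List V) : Prop :=
  G.IsWalk p ∧ p.Nodup

def IsSimplePathFromTo (G : DirGraph V) (p : List V) (x y : V) : Prop :=
  G.IsSimplePath p ∧ p.head? = some x ∧ p.getLast? = some y

/-- The arcs of a walk given as a list of vertices. -/
def arcs (p : List V) : List (V × V) := p.zip p.tail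

/-- The preterminal (second-to-last) vertex of a path. -/
def preterminal (p : List V) : Option V := p.dropLast.getLast?

/-- A simple cycle: a closed walk whose vertices are distinct except for the
repeated endpoint. -/
def IsSimpleCycle (G : DirGraph V) (p : List V) : Prop :=
  G.IsWalk p ∧ 2 ≤ p.length ∧ p.head? = p.getLast? ∧ p.dropLast.Nodup

/-- Two cycles are equal as cycles when they have the same set of arcs. -/
def CycleEquiv (p q : List V) : Prop :=
  ∀ a : V × V, a ∈ arcs p ↔ a ∈ arcs q

/-- Each arc lies in exactly one simple cycle (up to arc-set equality). -/
def CactusArcCond (G : DirGraph V) : Prop :=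
  ∀ x y, G.Adj x y →
    (∃ p, G.IsSimpleCycle p ∧ (x, y) ∈ arcs p) ∧
    (∀ p q, G.IsSimpleCycle p → (x, y) ∈ arcs p →
      G.IsSimpleCycle q → (x, y) ∈ arcs q → CycleEquiv p q)

/-- A cactus digraph: strongly connected and each arc lies in exactly one
simple cycle. -/
def IsCactus (G : DirGraph V) : Prop :=
  G.StronglyConnected ∧ G.CactusArcCond

noncomputable def inDeg (G : DirGraph V) (v : V) : ℕ := Nat.card {u // G.Adj u v}
noncomputable def outDeg (G : DirGraph V) (v : V) : ℕ := Nat.card {u // G.Adj v u}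

/-- A connecting point: a vertex shared by two distinct simple cycles. -/
def IsConnectingPoint (G : DirGraph V) (v : V) : Prop :=
  ∃ p q, G.IsSimpleCycle p ∧ G.IsSimpleCycle q ∧ ¬ CycleEquiv p q ∧ v ∈ p ∧ v ∈ q

/-- An expansion of digraphs. -/
structure IsExpansion (G' : DirGraph V') (G : DirGraph V) (φ : V' → V) : Prop where
  map_adj : ∀ ⦃x y⦄, G'.Adj x y → G.Adj (φ x) (φ y)
  vert_surj : Function.Surjective φ
  arc_surj : ∀ ⦃x y⦄, G.Adj x y → ∃ x' y', G'.Adj x' y' ∧ φ x' = x ∧ φ y' = y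
  lift : ∀ ⦃x y⦄, G.Adj x y → ∀ y', φ y' = y → ∃! x', G'.Adj x' y' ∧ φ x' = x

/-- A doubly bidirectionally connected pair. -/
def Dbcp (G : DirGraph V) (p q : V) : Prop :=
  p ≠ q ∧
  (∃ P Q, G.IsSimplePathFromTo P p q ∧ G.IsSimplePathFromTo Q p q ∧
    preterminal P ≠ preterminal Q) ∧
  (∃ P Q, G.IsSimplePathFromTo P q p ∧ G.IsSimplePathFromTo Q q p ∧
    preterminal P ≠ preterminal Q)

/-- Subgraph of a digraph: a vertex subset together with a subrelation of arcs
supported on it. -/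
structure Subgraph (G : DirGraph V) where
  verts : Set V
  Adj : V → V → Prop
  adj_sub : ∀ ⦃x y⦄, Adj x y → G.Adj x y
  mem_left : ∀ ⦃x y⦄, Adj x y → x ∈ verts
  mem_right : ∀ ⦃x y⦄, Adj x y → y ∈ verts

def Subgraph.toDirGraph {G : DirGraph V} (H : Subgraph G) : DirGraph V :=
  ⟨H.Adj, fun v h => G.loopless v (H.adj_sub h)⟩

/-- A sub-cactus digraph: a nonempty subgraph that is strongly connected (on
its vertex set) and in which each arc lies in exactly one simple cycle. -/
def Subgraph.IsCactus {G : DirGraph V} (H : Subgraph G) : Prop :=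
  H.verts.Nonempty ∧
  (∀ x ∈ H.verts, ∀ y ∈ H.verts, ∃ p, H.toDirGraph.IsWalkFromTo p x y) ∧
  H.toDirGraph.CactusArcCond

def Subgraph.inter {G : DirGraph V} (H K : Subgraph G) : Subgraph G where
  verts := H.verts ∩ K.verts
  Adj x y := H.Adj x y ∧ K.Adj x y
  adj_sub := fun _ _ h => H.adj_sub h.1
  mem_left := fun _ _ h => ⟨H.mem_left h.1, K.mem_left h.2⟩
  mem_right := fun _ _ h => ⟨H.mem_right h.1, K.mem_right h.2⟩

def Subgraph.le {G : DirGraph V} (H K : Subgraph G) : Prop :=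
  H.verts ⊆ K.verts ∧ ∀ ⦃x y⦄, H.Adj x y → K.Adj x y

/-- The single-vertex subgraph. -/
def singleVert (G : DirGraph V) (v : V) : Subgraph G where
  verts := {v}
  Adj _ _ := False
  adj_sub := by intro _ _ h; exact h.elim
  mem_left := by intro _ _ h; exact h.elim
  mem_right := by intro _ _ h; exact h.elim

/-- The intersection of all sub-cactus digraphs of `G` containing `W`. -/
def CsubOf (G : DirGraph V) (W : Set V) : Subgraph G where
  verts := {x | ∀ H : Subgraph G, H.IsCactus → W ⊆ H.verts → x ∈ H.verts}
  Adj x y := G.Adj x y ∧ ∀ H : Subgraph G, H.IsCactus → W ⊆ H.verts → H.Adj x y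
  adj_sub := fun _ _ h => h.1
  mem_left := fun _ _ h H hH hW => H.mem_left (h.2 H hH hW)
  mem_right := fun _ _ h H hH hW => H.mem_right (h.2 H hH hW)

open Classical in
/-- `C G r v`: the minimum sub-cactus digraph containing `{r, v}` (and the
single vertex `{r}` when `v = r`). -/
noncomputable def C (G : DirGraph V) (r v : V) : Subgraph G :=
  if v = r then singleVert G r else CsubOf G {r, v}

/-- The preorder on vertices of the rooted cactus digraph `(G, r)`:
`v ≼ w ↔ C(v) ⊆ C(w)`. -/
def pre (G : DirGraph V) (r v w : V) : Prop :=
  Subgraph.le (C G r v) (C G r w)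

end DirGraph
namespace DirGraph

variable {V : Type} {G : DirGraph V}

lemma arcs_cons₂ (a b : V) (l : List V) :
    arcs (a :: b :: l) = (a, b) :: arcs (b :: l) := by
  simp [arcs]

lemma isWalk_mono {G' : DirGraph V} (h : ∀ ⦃x y⦄, G.Adj x y → G'.Adj x y) :
    ∀ {l : List V}, G.IsWalk l → G'.IsWalk l
  | [], hw => hw.elim
  | [_], _ => trivial
  | a :: b :: l, hw => ⟨h hw.1, isWalk_mono h hw.2⟩

lemma adj_of_mem_arcs : ∀ {l : List V}, G.IsWalk l → ∀ {x y : V},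
    (x, y) ∈ arcs l → G.Adj x y
  | [], hw, _, _, _ => hw.elim
  | [_], _, _, _, h => by simp [arcs] at h
  | a :: b :: l, hw, x, y, h => by
      rw [arcs_cons₂] at h
      rcases List.mem_cons.1 h with h | h
      · injection h with h1 h2; subst h1; subst h2; exact hw.1
      · exact adj_of_mem_arcs hw.2 h

lemma mem_arcs_cons {e : V × V} {l : List V} (h : e ∈ arcs l) (a : V) :
    e ∈ arcs (a :: l) := by
  cases l with
  | nil => simp [arcs] at h
  | cons b t => rw [arcs_cons₂]; exact List.mem_cons_of_mem _ h

lemma mem_arcs_of_getElem : ∀ {l : List V} {i : ℕ} (h : i + 1 < l.length),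
    (l[i]'(Nat.lt_of_succ_lt h), l[i+1]'h) ∈ arcs l
  | [], i, h => by simp at h
  | [_], i, h => by simp at h
  | a :: b :: t, 0, h => by rw [arcs_cons₂]; simp
  | a :: b :: t, i+1, h => by
      rw [arcs_cons₂]
      refine List.mem_cons_of_mem _ ?_
      have := mem_arcs_of_getElem (l := b :: t) (i := i) (by simpa using h)
      simpa using this

lemma exists_getElem_of_mem_arcs : ∀ {l : List V} {x y : V}, (x, y) ∈ arcs l →
    ∃ i, ∃ h : i + 1 < l.length, l[i]'(Nat.lt_of_succ_lt h) = x ∧ l[i+1]'h = y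
  | [], _, _, h => by simp [arcs] at h
  | [_], _, _, h => by simp [arcs] at h
  | a :: b :: t, x, y, h => by
      rw [arcs_cons₂] at h
      rcases List.mem_cons.1 h with h | h
      · injection h with h1 h2
        exact ⟨0, by simp, by simpa using h1.symm, by simpa using h2.symm⟩
      · obtain ⟨i, hi, h1, h2⟩ := exists_getElem_of_mem_arcs h
        refine ⟨i+1, by simpa using hi, by simpa using h1, by simpa using h2⟩

lemma exists_arc_last : ∀ {l : List V} {x : V}, 2 ≤ l.length → l.getLast? = some x →
    ∃ w, (w, x) ∈ arcs l
  | [], _, h, _ => by simp at h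
  | [_], _, h, _ => by simp at h
  | [a, b], x, _, h => by
      refine ⟨a, ?_⟩
      have : b = x := by simpa using h
      subst this
      rw [arcs_cons₂]; simp
  | a :: b :: c :: t, x, _, h => by
      obtain ⟨w, hw⟩ := exists_arc_last (l := b :: c :: t) (by simp)
        (by rw [List.getLast?_cons_cons] at h; exact h)
      exact ⟨w, mem_arcs_cons hw a⟩

lemma isWalk_append : ∀ {p q : List V}, G.IsWalk p → G.IsWalk q →
    p.getLast? = q.head? → G.IsWalk (p ++ q.tail)
  | [], _, hp, _, _ => hp.elim
  | [a], q, _, hq, h => by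
      cases q with
      | nil => exact hq.elim
      | cons c t =>
        have : a = c := by simpa using h
        subst this
        simpa using hq
  | a :: b :: l, q, hp, hq, h =>
      ⟨hp.1, isWalk_append hp.2 hq (by rwa [List.getLast?_cons_cons] at h)⟩

lemma arcs_append : ∀ {p q : List V}, p ≠ [] → p.getLast? = q.head? →
    arcs (p ++ q.tail) = arcs p ++ arcs q
  | [], _, hp, _ => absurd rfl hp
  | [a], q, _, h => by
      cases q with
      | nil => simp at h
      | cons c t =>
        have : a = c := by simpa using h
        subst this
        simp [arcs]
  | a :: b :: l, q, _, h => by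
      have ih := arcs_append (p := b :: l) (q := q) (by simp)
        (by rwa [List.getLast?_cons_cons] at h)
      show arcs (a :: ((b :: l) ++ q.tail)) = _
      rw [show (b :: l) ++ q.tail = b :: (l ++ q.tail) from rfl, arcs_cons₂,
        arcs_cons₂]
      rw [show b :: (l ++ q.tail) = (b :: l) ++ q.tail from rfl, ih]
      simp

lemma isWalk_take : ∀ {l : List V} {n : ℕ}, G.IsWalk l → 0 < n → G.IsWalk (l.take n)
  | [], _, hw, _ => hw.elim
  | [a], n, hw, hn => by
      match n, hn with
      | n+1, _ => simpa using hw
  | a :: b :: l, 1, hw, _ => by simp [List.take]; trivial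
  | a :: b :: l, n+2, hw, _ => ⟨hw.1, isWalk_take (l := b :: l) (n := n+1) hw.2 (by omega)⟩

lemma isWalk_drop : ∀ {l : List V} {n : ℕ}, G.IsWalk l → n < l.length → G.IsWalk (l.drop n)
  | l, 0, hw, _ => hw
  | [], n+1, hw, h => hw.elim
  | [a], n+1, _, h => by simp at h
  | a :: b :: l, n+1, hw, h => isWalk_drop (l := b :: l) (n := n) hw.2 (by simpa using h)

lemma isWalk_of_append_right : ∀ {s t : List V}, G.IsWalk (s ++ t) → t ≠ [] → G.IsWalk t
  | [], t, h, _ => h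
  | [a], t, h, ht => by
      cases t with
      | nil => exact absurd rfl ht
      | cons c t' => exact h.2
  | a :: b :: s, t, h, ht => isWalk_of_append_right (s := b :: s) h.2 ht

lemma mem_arcs_append_right {e : V × V} : ∀ {s t : List V}, e ∈ arcs t → e ∈ arcs (s ++ t)
  | [], _, h => h
  | a :: s, t, h => mem_arcs_cons (mem_arcs_append_right (s := s) h) a

lemma mem_verts_of_walk {K : Subgraph G} : ∀ {l : List V}, K.toDirGraph.IsWalk l →
    2 ≤ l.length → ∀ v ∈ l, v ∈ K.verts
  | [], hw, h, _, _ => by simp at h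
  | [_], _, h, _, _ => by simp at h
  | a :: b :: t, hw, _, v, hv => by
      rcases List.mem_cons.1 hv with rfl | hv
      · exact K.mem_left hw.1
      · cases t with
        | nil =>
          have : v = b := by simpa using hv
          subst this
          exact K.mem_right hw.1
        | cons c t' => exact mem_verts_of_walk hw.2 (by simp) v hv

lemma exists_path_of_walk (G : DirGraph V) : ∀ (n : ℕ) (W : List V), W.length ≤ n →
    G.IsWalk W →
    ∃ P, G.IsWalk P ∧ P.Nodup ∧ P.head? = W.head? ∧ P.getLast? = W.getLast? ∧
      ∀ e ∈ arcs P, e ∈ arcs W := by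
  intro n
  induction n with
  | zero =>
    intro W h hw
    cases W with
    | nil => exact hw.elim
    | cons a t => simp at h
  | succ n ih =>
    intro W hlen hw
    match W, hw with
    | [a], _ => exact ⟨[a], trivial, by simp, rfl, rfl, by simp [arcs]⟩
    | a :: b :: l, hw =>
      obtain ⟨P, hP, hnd, hh, hl, harcs⟩ := ih (b :: l) (by simpa using hlen) hw.2
      by_cases ha : a ∈ P
      · obtain ⟨s, t, rfl⟩ := List.append_of_mem ha
        refine ⟨a :: t, isWalk_of_append_right hP (by simp), ?_, by simp, ?_, ?_⟩
        · exact ((List.nodup_append.1 hnd).2.1)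
        · rw [List.getLast?_cons_cons, ← hl,
            List.getLast?_append_of_ne_nil s (l₂ := a :: t) (by simp)]
        · intro e he
          have : e ∈ arcs (s ++ a :: t) := mem_arcs_append_right he
          exact mem_arcs_cons (harcs e this) a
      · cases P with
        | nil => simp at hh
        | cons c P' =>
          have hc : c = b := by simpa using hh
          refine ⟨a :: c :: P', ⟨by rw [hc]; exact hw.1, hP⟩,
            List.nodup_cons.2 ⟨ha, hnd⟩, by simp, ?_, ?_⟩
          · simp only [List.getLast?_cons_cons]
            exact hl
          · intro e he
            rw [arcs_cons₂] at he
            rcases List.mem_cons.1 he with rfl | he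
            · rw [hc, arcs_cons₂]; simp
            · exact mem_arcs_cons (harcs e he) a

lemma isSimpleCycle_cons {P : List V} {x y : V} (hP : G.IsWalk P) (hnd : P.Nodup)
    (hy : P.head? = some y) (hx : P.getLast? = some x) (hxy : G.Adj x y) :
    G.IsSimpleCycle (x :: P) ∧ (x, y) ∈ arcs (x :: P) := by
  cases P with
  | nil => simp at hy
  | cons c P' =>
    obtain rfl : c = y := by simpa using hy
    have hPne : (c :: P') ≠ [] := by simp
    have hlast : (c :: P').getLast hPne = x := by
      have := List.getLast?_eq_getLast hPne
      rw [this] at hx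
      exact Option.some.inj hx
    have hsplit : (c :: P').dropLast ++ [x] = c :: P' := by
      conv_rhs => rw [← List.dropLast_append_getLast hPne]
      rw [hlast]
    refine ⟨⟨⟨hxy, hP⟩, by simp, ?_, ?_⟩, by rw [arcs_cons₂]; simp⟩
    · rw [List.getLast?_cons_cons, hx]; rfl
    · have hdl : (x :: c :: P').dropLast = x :: (c :: P').dropLast := by
        simp [List.dropLast]
      rw [hdl, List.nodup_cons]
      constructor
      · intro hmem
        have hnd2 : ((c :: P').dropLast ++ [x]).Nodup := by rw [hsplit]; exact hnd
        rw [List.nodup_append] at hnd2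
        exact hnd2.2.2 x hmem x (by simp) rfl
      · exact hnd.sublist (List.dropLast_sublist _)

lemma no_return (hu : G.CactusArcCond) (K : Subgraph G)
    (hK : K.IsCactus) (p : List V) (hw : G.IsWalk p) (hnd : p.Nodup)
    (a b : ℕ) (hab : a + 1 ≤ b) (hb : b < p.length)
    (ha1 : p[a]'(by omega) ∈ K.verts) (ha2 : p[a+1]'(by omega) ∉ K.verts)
    (hbK : p[b]'hb ∈ K.verts) : False := by
  rcases eq_or_lt_of_le hab with rfl | hab2
  · exact ha2 hbK
  have ha1lt : a + 1 < p.length := by omega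
  set x := p[a]'(by omega) with hxdef
  set y := p[a+1]'ha1lt with hydef
  set z := p[b]'hb with hzdef
  set seg := (p.drop (a+1)).take (b - a) with hsegdef
  have hseglen : seg.length = b - a := by
    rw [hsegdef]
    rw [List.length_take, List.length_drop]
    omega
  have hsegget : ∀ i j (h : i < b - a) (hj : j < p.length), a + 1 + i = j →
      seg[i]'(by omega) = p[j]'hj := by
    intro i j h hj hij
    subst hij
    simp only [hsegdef]
    rw [List.getElem_take, List.getElem_drop]
  have hsegwalk : G.IsWalk seg := isWalk_take (isWalk_drop hw (by omega)) (by omega)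
  have hsegnd : seg.Nodup :=
    hnd.sublist ((List.take_sublist _ _).trans (List.drop_sublist _ _))
  have hsegne : seg ≠ [] := by
    intro h
    rw [h] at hseglen
    simp at hseglen
    omega
  have hseghead : seg.head? = some y := by
    rw [List.head?_eq_getElem?, List.getElem?_eq_getElem (by omega : 0 < seg.length)]
    rw [hsegget 0 (a+1) (by omega) (by omega) (by omega), hydef]
  have hseglast : seg.getLast? = some z := by
    rw [List.getLast?_eq_getElem?,
      List.getElem?_eq_getElem (by omega : seg.length - 1 < seg.length)]
    have h0 : seg[seg.length - 1]'(by omega) = p[b]'hb := by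
      have h1 : seg.length - 1 = b - a - 1 := by omega
      simp only [h1]
      exact hsegget (b - a - 1) b (by omega) hb (by omega)
    rw [h0, hzdef]
  obtain ⟨q, hqwalk, hqhead, hqlast⟩ := hK.2.1 z hbK x ha1
  have hzx : z ≠ x := by
    intro h
    rw [hzdef, hxdef] at h
    have := (hnd.getElem_inj_iff).1 h
    omega
  have hq2 : 2 ≤ q.length := by
    match q, hqwalk, hqhead, hqlast with
    | [], hqw, _, _ => exact hqw.elim
    | [u], _, hh, hl =>
      exfalso
      apply hzx
      have h1 : u = z := by simpa using hh
      have h2 : u = x := by simpa using hl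
      rw [← h1, h2]
    | u :: v :: t, _, _, _ => simp
  have hqtne : q.tail ≠ [] := by
    intro h
    have := congrArg List.length h
    rw [List.length_tail] at this
    simp at this
    omega
  set W := seg ++ q.tail with hWdef
  have hWwalk : G.IsWalk W :=
    isWalk_append hsegwalk (isWalk_mono (fun _ _ h => K.adj_sub h) hqwalk)
      (by rw [hseglast, hqhead])
  have hWarcs : arcs W = arcs seg ++ arcs q :=
    arcs_append hsegne (by rw [hseglast, hqhead])
  have hWhead : W.head? = some y := by
    rw [hWdef, List.head?_append_of_ne_nil seg hsegne, hseghead]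
  have hWlast : W.getLast? = some x := by
    rw [hWdef, List.getLast?_append_of_ne_nil seg (l₂ := q.tail) hqtne]
    match q, hqwalk, hqlast, hqtne with
    | [], hqw, _, _ => exact hqw.elim
    | [u], _, _, ht => exact absurd rfl ht
    | u :: v :: t, _, hl, _ =>
      rw [List.getLast?_cons_cons] at hl
      exact hl
  obtain ⟨P, hPwalk, hPnd, hPhead, hPlast, hParcs⟩ :=
    exists_path_of_walk G W.length W le_rfl hWwalk
  rw [hWhead] at hPhead
  rw [hWlast] at hPlast
  have hyx : y ≠ x := by
    intro h
    apply ha2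
    rw [hydef] at h ⊢
    rw [h]
    exact ha1
  have hadjxy : G.Adj x y :=
    adj_of_mem_arcs hw (mem_arcs_of_getElem (l := p) (i := a) (by omega))
  obtain ⟨hZcyc, hZxy⟩ := isSimpleCycle_cons hPwalk hPnd hPhead hPlast hadjxy
  have hP2 : 2 ≤ P.length := by
    match P, hPwalk, hPhead, hPlast with
    | [], hw', _, _ => exact hw'.elim
    | [u], _, hh, hl =>
      exfalso
      apply hyx
      have h1 : u = y := by simpa using hh
      have h2 : u = x := by simpa using hl
      rw [← h1, h2]
    | u :: v :: t, _, _, _ => simp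
  obtain ⟨w, hwarc⟩ := exists_arc_last hP2 hPlast
  have hwarcW : (w, x) ∈ arcs W := hParcs _ hwarc
  rw [hWarcs] at hwarcW
  have hwq : (w, x) ∈ arcs q := by
    rcases List.mem_append.1 hwarcW with h | h
    · exfalso
      obtain ⟨i, hi, h1, h2⟩ := exists_getElem_of_mem_arcs h
      have hilt : i + 1 < b - a := by omega
      have e1 : p[a+1+(i+1)]'(by omega) = p[a]'(by omega) := by
        rw [← hsegget (i+1) (a+1+(i+1)) hilt (by omega) rfl, ← hxdef]
        exact h2
      have := (hnd.getElem_inj_iff).1 e1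
      omega
    · exact h
  have hKwx : K.Adj w x := adj_of_mem_arcs hqwalk hwq
  obtain ⟨⟨cyc, hcyc, hcycmem⟩, _⟩ := hK.2.2 w x hKwx
  have hcycG : G.IsSimpleCycle cyc :=
    ⟨isWalk_mono (fun _ _ h => K.adj_sub h) hcyc.1, hcyc.2.1, hcyc.2.2.1, hcyc.2.2.2⟩
  have hwxZ : (w, x) ∈ arcs (x :: P) := mem_arcs_cons hwarc x
  have hequiv := (hu w x (K.adj_sub hKwx)).2 (x :: P) cyc hZcyc hwxZ hcycG hcycmem
  have hxycyc : (x, y) ∈ arcs cyc := (hequiv (x, y)).1 hZxy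
  exact ha2 (K.mem_right (adj_of_mem_arcs hcyc.1 hxycyc))


lemma singleVert_isCactus (G : DirGraph V) (r : V) : (singleVert G r).IsCactus := by
  refine ⟨⟨r, rfl⟩, ?_, ?_⟩
  · intro x hx y hy
    have hxy : x = y := by rw [(hx : x = r), (hy : y = r)]
    exact ⟨[x], trivial, rfl, by rw [hxy]; rfl⟩
  · intro x y h
    exact h.elim

lemma mem_C_self (G : DirGraph V) (r v : V) : v ∈ (C G r v).verts := by
  rw [C]
  split_ifs with h
  · subst h; rfl
  · exact fun H hH hsub => hsub (by simp)

lemma pre_of_forall (G : DirGraph V) (r v w : V) (hw : w ≠ r)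
    (h : ∀ H : Subgraph G, H.IsCactus → r ∈ H.verts → w ∈ H.verts → v ∈ H.verts) :
    pre G r v w := by
  have hsub : ∀ H : Subgraph G, H.IsCactus → {r, w} ⊆ H.verts →
      ({r, v} : Set V) ⊆ H.verts := by
    intro H hH hrw
    have hr : r ∈ H.verts := hrw (by simp)
    have hwm : w ∈ H.verts := hrw (by simp)
    intro u hu
    rcases hu with rfl | hu
    · exact hr
    · have : u = v := hu
      subst this
      exact h H hH hr hwm
  unfold pre Subgraph.le
  rw [C, C, if_neg hw]
  split_ifs with hv
  · refine ⟨?_, ?_⟩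
    · intro u hu
      have : u = r := hu
      subst this
      exact fun H hH hrw => hrw (by simp)
    · intro _ _ huv
      exact huv.elim
  · refine ⟨?_, ?_⟩
    · intro u hu H hH hrw
      exact hu H hH (hsub H hH hrw)
    · intro u u' hadj
      exact ⟨hadj.1, fun H hH hrw => hadj.2 H hH (hsub H hH hrw)⟩


end DirGraph


open DirGraph in
/-- In the proof of the single-dipped lemma: if `(v_0, …, v_n)` is a simple
path with `v_0, …, v_k ∈ C(v_0)` and `v_{k+1} ∉ C(v_0)`, then
`v_k ≺ v_{k+1}` and `v_{k+1} ≼ v_{k+2} ≼ ⋯ ≼ v_n`. -/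
theorem single_dipped_step {V : Type} (G : DirGraph V) (r : V)
    (hG : G.IsCactus) (vs : List V) (k : ℕ) (hk : k + 1 < vs.length)
    (hp : G.IsSimplePath vs)
    (hin : ∀ i (hi : i ≤ k), (vs[i]'(by omega)) ∈ (C G r (vs[0]'(by omega))).verts)
    (hout : (vs[k+1]'hk) ∉ (C G r (vs[0]'(by omega))).verts) :
    (pre G r (vs[k]'(by omega)) (vs[k+1]'hk) ∧
      ¬ pre G r (vs[k+1]'hk) (vs[k]'(by omega))) ∧
    (∀ i, k + 1 ≤ i → (h : i + 1 < vs.length) →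
      pre G r (vs[i]'(by omega)) (vs[i+1]'h)) := by
  classical
  have hw : G.IsWalk vs := hp.1
  have hnd : vs.Nodup := hp.2
  obtain ⟨K, hKc, hKr, hKin, hKout⟩ :
      ∃ K : Subgraph G, K.IsCactus ∧ r ∈ K.verts ∧
        (∀ i (hi : i ≤ k), vs[i]'(by omega) ∈ K.verts) ∧ vs[k+1]'hk ∉ K.verts := by
    by_cases h0r : vs[0]'(by omega) = r
    · refine ⟨singleVert G r, singleVert_isCactus G r, rfl, ?_, ?_⟩
      · intro i hi
        have hm := hin i hi
        rw [C, if_pos h0r] at hm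
        exact hm
      · intro hmem
        apply hout
        rw [C, if_pos h0r]
        exact hmem
    · rw [C, if_neg h0r] at hout
      have hout' : ¬ ∀ H : Subgraph G, H.IsCactus → ({r, vs[0]'(by omega)} : Set V) ⊆ H.verts →
          vs[k+1]'hk ∈ H.verts := hout
      push_neg at hout'
      obtain ⟨K, hKc, hKsub, hKout⟩ := hout'
      refine ⟨K, hKc, hKsub (by simp), ?_, hKout⟩
      intro i hi
      have hm := hin i hi
      rw [C, if_neg h0r] at hm
      exact hm K hKc hKsub
  have hner : ∀ b (hb : b < vs.length), k + 1 ≤ b → vs[b]'hb ≠ r := by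
    intro b hb hkb he
    exact no_return hG.2 K hKc vs hw hnd k b hkb hb (hKin k le_rfl) hKout (he ▸ hKr)
  have hIN : ∀ i, k ≤ i → ∀ (h : i + 1 < vs.length), ∀ H : Subgraph G, H.IsCactus →
      r ∈ H.verts → vs[i+1]'h ∈ H.verts → vs[i]'(by omega) ∈ H.verts := by
    intro i hki h H hHc hHr hH1
    by_contra hHi
    have key : ∀ d j (hj : j ≤ i), i - j ≤ d → vs[j]'(by omega) ∈ H.verts → False := by
      intro d
      induction d with
      | zero =>
        intro j hj hd hmem
        have hji : j = i := by omega
        subst hji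
        exact hHi hmem
      | succ d ih =>
        intro j hj hd hmem
        rcases eq_or_lt_of_le hj with rfl | hj2
        · exact hHi hmem
        · by_cases h2 : vs[j+1]'(by omega) ∈ H.verts
          · exact ih (j+1) (by omega) (by omega) h2
          · exact no_return hG.2 H hHc vs hw hnd j (i+1) (by omega) h hmem h2 hH1
    have hall : ∀ j (hj : j ≤ i), vs[j]'(by omega) ∉ H.verts :=
      fun j hj hmem => key (i - j) j hj le_rfl hmem
    have hi1r : vs[i+1]'h ≠ r := hner (i+1) h (by omega)
    obtain ⟨q0, hq0w, hq0h, hq0l⟩ := hHc.2.1 _ hH1 r hHr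
    obtain ⟨Q, hQw, hQnd, hQh, hQl, -⟩ :=
      exists_path_of_walk H.toDirGraph q0.length q0 le_rfl hq0w
    rw [hq0h] at hQh
    rw [hq0l] at hQl
    have hQ2 : 2 ≤ Q.length := by
      match Q, hQw, hQh, hQl with
      | [], hqw, _, _ => exact hqw.elim
      | [u], _, hh, hl =>
        exfalso
        apply hi1r
        have h1 : u = vs[i+1]'h := by simpa using hh
        have h2 : u = r := by simpa using hl
        rw [← h1, h2]
      | u :: v :: t, _, _, _ => simp
    have hQmem : ∀ v ∈ Q, v ∈ H.verts := mem_verts_of_walk hQw hQ2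
    have hQtne : Q.tail ≠ [] := by
      intro hq
      have := congrArg List.length hq
      rw [List.length_tail] at this
      simp at this
      omega
    set T := vs.take (i+2) with hTdef
    have hTlen : T.length = i + 2 := by
      rw [hTdef, List.length_take]
      omega
    have hTget : ∀ j (hj : j < i + 2), T[j]'(by omega) = vs[j]'(by omega) := by
      intro j hj
      simp only [hTdef]
      rw [List.getElem_take]
    have hTlast : T.getLast? = some (vs[i+1]'h) := by
      rw [List.getLast?_eq_getElem?,
        List.getElem?_eq_getElem (by omega : T.length - 1 < T.length)]
      have h1 : T[T.length - 1]'(by omega) = vs[i+1]'h := by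
        have h2 : T.length - 1 = i + 1 := by omega
        simp only [h2]
        exact hTget (i+1) (by omega)
      rw [h1]
    have hTwalk : G.IsWalk T := isWalk_take hw (by omega)
    have hTnd : T.Nodup := hnd.sublist (List.take_sublist _ _)
    set p' := T ++ Q.tail with hp'def
    have hp'w : G.IsWalk p' :=
      isWalk_append hTwalk (isWalk_mono (fun _ _ hx => H.adj_sub hx) hQw)
        (by rw [hTlast, hQh])
    have hp'nd : p'.Nodup := by
      rw [hp'def, List.nodup_append]
      refine ⟨hTnd, hQnd.sublist (List.tail_sublist _), ?_⟩
      intro u huT w huQ huw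
      subst huw
      obtain ⟨j, hjlen, rfl⟩ := List.mem_iff_getElem.1 huT
      have hj2 : j < i + 2 := by omega
      have hju : T[j]'hjlen = vs[j]'(by omega) := hTget j hj2
      have huH : T[j]'hjlen ∈ H.verts := hQmem _ (List.mem_of_mem_tail huQ)
      rcases Nat.lt_or_ge j (i+1) with hj3 | hj3
      · exact hall j (by omega) (by rw [← hju]; exact huH) 
      · have hji : j = i + 1 := by omega
        subst hji
        match Q, hQnd, hQh, huQ with
        | c :: Q', hQnd', hQh', huQ' =>
          have hc : c = vs[i+1]'h := by simpa using hQh'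
          have hmem2 : T[i+1]'hjlen ∈ Q' := huQ'
          rw [hju, ← hc] at hmem2
          exact (List.nodup_cons.1 hQnd').1 hmem2
    have hp'last : p'.getLast? = some r := by
      rw [hp'def, List.getLast?_append_of_ne_nil T (l₂ := Q.tail) hQtne]
      match Q, hQw, hQl, hQtne with
      | [], hqw, _, _ => exact hqw.elim
      | [u], _, _, ht => exact absurd rfl ht
      | u :: v :: t, _, hl, _ =>
        rw [List.getLast?_cons_cons] at hl
        exact hl
    have hp'len : i + 2 < p'.length := by
      rw [hp'def, List.length_append, hTlen]
      have : 0 < Q.tail.length := List.length_pos_iff.2 hQtne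
      omega
    have hgetp' : ∀ j (hj : j < i + 2), p'[j]'(by omega) = vs[j]'(by omega) := by
      intro j hj
      simp only [hp'def]
      rw [List.getElem_append_left (by omega : j < T.length)]
      exact hTget j hj
    have hlastidx : p'[p'.length - 1]'(by omega) = r := by
      have hx1 := List.getLast?_eq_getElem? (l := p')
      rw [hp'last, List.getElem?_eq_getElem (by omega : p'.length - 1 < p'.length)] at hx1
      exact Option.some.inj hx1.symm
    refine no_return hG.2 K hKc p' hp'w hp'nd k (p'.length - 1) (by omega) (by omega) ?_ ?_ ?_
    · rw [hgetp' k (by omega)]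
      exact hKin k le_rfl
    · rw [hgetp' (k+1) (by omega)]
      exact hKout
    · rw [hlastidx]
      exact hKr
  have hnot : ¬ pre G r (vs[k+1]'hk) (vs[k]'(by omega)) := by
    intro hpre
    have h2 := hpre.1 (mem_C_self G r (vs[k+1]'hk))
    by_cases hkr : vs[k]'(by omega) = r
    · rw [C, if_pos hkr] at h2
      exact hner (k+1) hk (by omega) h2
    · rw [C, if_neg hkr] at h2
      apply hKout
      refine h2 K hKc ?_
      intro u hu
      rcases hu with rfl | hu
      · exact hKr
      · have hu' : u = vs[k]'(by omega) := hu
        subst hu'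
        exact hKin k le_rfl
  have hpos : ∀ i, k ≤ i → ∀ (h : i + 1 < vs.length),
      pre G r (vs[i]'(by omega)) (vs[i+1]'h) := by
    intro i hki h
    exact pre_of_forall G r _ _ (hner (i+1) h (by omega))
      (fun H hH hHr hHw => hIN i hki h H hH hHr hHw)
  exact ⟨⟨hpos k le_rfl hk, hnot⟩, fun i hi h => hpos i (by omega) h⟩
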